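/- Let μ > 0 and define f : ℝ × ℝ³ → ℂ × ℂ³ = ℂ⁴ by f(x, y) = ( √(μ²/(μ²+1))·e^{−ix/μ}, √(1/(μ²+1))·e^{iμx}·y ). Then for every x ∈ ℝ and every y ∈ ℝ³ with ‖y‖ = 1: (i) ‖f(x,y)‖ = 1, so f maps into the unit sphere S⁷ ⊂ ℂ⁴; (ii) ⟨∂f/∂x, i·f⟩_ℝ = 0; and (iii) for every V ∈ ℝ³, the tangent vector (0, √(1/(μ²+1))·e^{iμx}·V) obtained by varying y satisfies ⟨(0, √(1/(μ²+1))·e^{iμx}·V), i·f(x,y)⟩_ℝ = 0. Hence the contact form of S⁷ pulls back to zero along f, i.e. f is a Legendrian immersion. -/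

import Mathlib

open scoped ComplexInnerProductSpace

private lemma conj_exp_I' (r : ℝ) :
    (starRingEnd ℂ) (Complex.exp (Complex.I * r)) = Complex.exp (-Complex.I * r) := by
  rw [← Complex.exp_conj]; congr 1; simp

private lemma conj_exp_negI' (r : ℝ) :
    (starRingEnd ℂ) (Complex.exp (-Complex.I * r)) = Complex.exp (Complex.I * r) := by
  rw [← Complex.exp_conj]; congr 1; simp

private lemma exp_mul_exp' (r : ℝ) :
    Complex.exp (Complex.I * r) * Complex.exp (-Complex.I * r) = 1 := by
  rw [← Complex.exp_add, show Complex.I*r + -Complex.I*r = 0 by ring, Complex.exp_zero]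

private lemma re_eq_zero_of_eq_zero (z : ℂ) (h : z = 0) : z.re = 0 := by rw [h]; rfl

private lemma re_eq_zero_of_eq_I_mul (z : ℂ) (r : ℝ) (h : z = Complex.I * (r:ℂ)) : z.re = 0 := by
  rw [h]; simp

set_option maxHeartbeats 2000000 in
/-- the non-flat immersion f(x,y) = (√(μ²/(μ²+1))e^{−ix/μ}, √(1/(μ²+1))e^{iμx}y)
maps into S⁷ and is Legendrian. -/
theorem stmt_6 (μ : ℝ) (hμ : 0 < μ)
    (f : ℝ → EuclideanSpace ℝ (Fin 3) → EuclideanSpace ℂ (Fin 4))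
    (hf : ∀ (x : ℝ) (y : EuclideanSpace ℝ (Fin 3)),
      f x y = (WithLp.equiv 2 (Fin 4 → ℂ)).symm
        ![((Real.sqrt (μ^2/(μ^2 + 1)) : ℝ) : ℂ) * Complex.exp (-Complex.I * ((x/μ : ℝ) : ℂ)),
          ((Real.sqrt (1/(μ^2 + 1)) : ℝ) : ℂ) * Complex.exp (Complex.I * ((μ*x : ℝ) : ℂ)) * ((y 0 : ℝ) : ℂ),
          ((Real.sqrt (1/(μ^2 + 1)) : ℝ) : ℂ) * Complex.exp (Complex.I * ((μ*x : ℝ) : ℂ)) * ((y 1 : ℝ) : ℂ),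
          ((Real.sqrt (1/(μ^2 + 1)) : ℝ) : ℂ) * Complex.exp (Complex.I * ((μ*x : ℝ) : ℂ)) * ((y 2 : ℝ) : ℂ)]) :
    ∀ (x : ℝ) (y : EuclideanSpace ℝ (Fin 3)), ‖y‖ = 1 →
      ‖f x y‖ = 1 ∧
      (⟪deriv (fun t => f t y) x, Complex.I • f x y⟫).re = 0 ∧
      ∀ V : EuclideanSpace ℝ (Fin 3),
        (⟪((WithLp.equiv 2 (Fin 4 → ℂ)).symm
            ![(0 : ℂ),
              ((Real.sqrt (1/(μ^2 + 1)) : ℝ) : ℂ) * Complex.exp (Complex.I * ((μ*x : ℝ) : ℂ)) * ((V 0 : ℝ) : ℂ),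
              ((Real.sqrt (1/(μ^2 + 1)) : ℝ) : ℂ) * Complex.exp (Complex.I * ((μ*x : ℝ) : ℂ)) * ((V 1 : ℝ) : ℂ),
              ((Real.sqrt (1/(μ^2 + 1)) : ℝ) : ℂ) * Complex.exp (Complex.I * ((μ*x : ℝ) : ℂ)) * ((V 2 : ℝ) : ℂ)]),
          Complex.I • f x y⟫).re = 0 := by
  intro x y hy
  have hμ0 : (μ:ℝ) ≠ 0 := ne_of_gt hμ
  have hμ0' : (μ:ℂ) ≠ 0 := by exact_mod_cast hμ0
  have hden : (0:ℝ) < μ^2 + 1 := by positivity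
  set A : ℝ := Real.sqrt (μ^2/(μ^2 + 1)) with hAdef
  set B : ℝ := Real.sqrt (1/(μ^2 + 1)) with hBdef
  have hA2 : A^2 = μ^2/(μ^2+1) := Real.sq_sqrt (by positivity)
  have hB2 : B^2 = 1/(μ^2+1) := Real.sq_sqrt (by positivity)
  have hA2c : ((A:ℂ))^2 = (μ:ℂ)^2/((μ:ℂ)^2+1) := by exact_mod_cast hA2
  have hB2c : ((B:ℂ))^2 = 1/((μ:ℂ)^2+1) := by exact_mod_cast hB2
  have hy2 : (y 0)^2 + (y 1)^2 + (y 2)^2 = 1 := by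
    have h1 : ‖y‖^2 = 1 := by rw [hy]; norm_num
    rw [EuclideanSpace.norm_eq, Real.sq_sqrt (Finset.sum_nonneg fun i _ => by positivity)] at h1
    simpa [Fin.sum_univ_three, sq_abs] using h1
  have hy2c : ((y 0:ℝ):ℂ)^2 + ((y 1:ℝ):ℂ)^2 + ((y 2:ℝ):ℂ)^2 = 1 := by
    have h := congrArg (fun r : ℝ => (r:ℂ)) hy2; push_cast at h; exact h
  set E : ℂ := Complex.exp (-Complex.I * ((x/μ : ℝ) : ℂ)) with hEdef
  set F : ℂ := Complex.exp (Complex.I * ((μ*x : ℝ) : ℂ)) with hFdef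
  have hEE : Complex.exp (Complex.I * ((x/μ : ℝ) : ℂ)) * E = 1 := exp_mul_exp' _
  have hFF : F * Complex.exp (-Complex.I * ((μ*x : ℝ) : ℂ)) = 1 := by
    rw [hFdef]; rw [mul_comm] at *; exact (mul_comm _ _).trans (exp_mul_exp' _)
  have hconjE : (starRingEnd ℂ) E = Complex.exp (Complex.I * ((x/μ : ℝ) : ℂ)) := conj_exp_negI' _
  have hconjF : (starRingEnd ℂ) F = Complex.exp (-Complex.I * ((μ*x : ℝ) : ℂ)) := conj_exp_I' _
  refine ⟨?_, ?_, ?_⟩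
  · -- norm
    rw [hf, EuclideanSpace.norm_eq]
    rw [show (1:ℝ) = Real.sqrt 1 from (Real.sqrt_one).symm]
    congr 1
    have hnE : ‖E‖ = 1 := by
      rw [hEdef, Complex.norm_exp]; simp
    have hnF : ‖F‖ = 1 := by
      rw [hFdef, Complex.norm_exp]; simp
    have hnA : ‖((A:ℝ):ℂ)‖ = A := by
      rw [Complex.norm_real]; exact abs_of_nonneg (Real.sqrt_nonneg _)
    have hnB : ‖((B:ℝ):ℂ)‖ = B := by
      rw [Complex.norm_real]; exact abs_of_nonneg (Real.sqrt_nonneg _)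
    simp only [WithLp.equiv_symm_apply, PiLp.toLp_apply, Fin.sum_univ_four, Matrix.cons_val_zero,
      Matrix.cons_val_one, Matrix.head_cons, Matrix.cons_val_two, Matrix.tail_cons,
      Matrix.cons_val_three, norm_mul, hnE, hnF, hnA, hnB, Complex.norm_real,
      Real.norm_eq_abs, mul_one, ← hEdef, ← hFdef]
    have hkey : A^2 + B^2*(y 0)^2 + B^2*(y 1)^2 + B^2*(y 2)^2 = 1 := by
      rw [hA2, hB2]
      field_simp
      nlinarith [hy2]
    nlinarith [hkey, sq_abs (y 0), sq_abs (y 1), sq_abs (y 2)]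
  · -- contact form on ∂/∂x direction
    have hid : HasDerivAt (fun t:ℝ => (t:ℂ)) 1 x := by
      simpa using (hasDerivAt_id x).ofReal_comp
    have h1 : ∀ t:ℝ, -Complex.I * ((t/μ:ℝ):ℂ) = (-Complex.I/μ) * (t:ℂ) := by
      intro t; push_cast; field_simp
    have h2 : ∀ t:ℝ, Complex.I * ((μ*t:ℝ):ℂ) = (Complex.I*μ) * (t:ℂ) := by
      intro t; push_cast; ring
    have hc0 : HasDerivAt (fun t:ℝ => ((A:ℝ):ℂ) * Complex.exp (-Complex.I * ((t/μ:ℝ):ℂ)))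
        (((A:ℝ):ℂ) * (E * (-Complex.I/μ))) x := by
      have h := ((hid.const_mul (-Complex.I/μ)).cexp).const_mul ((A:ℝ):ℂ)
      simp only [mul_one, ← h1] at h
      exact h
    have hcj : ∀ c : ℝ, HasDerivAt (fun t:ℝ => ((B:ℝ):ℂ) * Complex.exp (Complex.I * ((μ*t:ℝ):ℂ)) * (c:ℂ))
        (((B:ℝ):ℂ) * (F * (Complex.I*μ)) * (c:ℂ)) x := by
      intro c
      have h := (((hid.const_mul (Complex.I*μ)).cexp).const_mul ((B:ℝ):ℂ)).mul_const (c:ℂ)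
      simp only [mul_one, ← h2] at h
      exact h
    have hg : HasDerivAt (fun t:ℝ => (fun i => (![((A:ℝ):ℂ) * Complex.exp (-Complex.I * ((t/μ : ℝ) : ℂ)),
          ((B:ℝ):ℂ) * Complex.exp (Complex.I * ((μ*t : ℝ) : ℂ)) * ((y 0 : ℝ) : ℂ),
          ((B:ℝ):ℂ) * Complex.exp (Complex.I * ((μ*t : ℝ) : ℂ)) * ((y 1 : ℝ) : ℂ),
          ((B:ℝ):ℂ) * Complex.exp (Complex.I * ((μ*t : ℝ) : ℂ)) * ((y 2 : ℝ) : ℂ)] : Fin 4 → ℂ) i))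
        (![((A:ℝ):ℂ) * (E * (-Complex.I/μ)),
          ((B:ℝ):ℂ) * (F * (Complex.I*μ)) * ((y 0 : ℝ):ℂ),
          ((B:ℝ):ℂ) * (F * (Complex.I*μ)) * ((y 1 : ℝ):ℂ),
          ((B:ℝ):ℂ) * (F * (Complex.I*μ)) * ((y 2 : ℝ):ℂ)] : Fin 4 → ℂ) x := by
      apply hasDerivAt_pi.2
      intro i
      fin_cases i
      · simpa using hc0
      · simpa using hcj (y 0)
      · simpa using hcj (y 1)
      · simpa using hcj (y 2)
    have hD : HasDerivAt (fun t => f t y)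
        ((WithLp.equiv 2 (Fin 4 → ℂ)).symm
          (![((A:ℝ):ℂ) * (E * (-Complex.I/μ)),
            ((B:ℝ):ℂ) * (F * (Complex.I*μ)) * ((y 0 : ℝ):ℂ),
            ((B:ℝ):ℂ) * (F * (Complex.I*μ)) * ((y 1 : ℝ):ℂ),
            ((B:ℝ):ℂ) * (F * (Complex.I*μ)) * ((y 2 : ℝ):ℂ)] : Fin 4 → ℂ)) x := by
      have h := (((PiLp.continuousLinearEquiv 2 ℂ (fun _ : Fin 4 => ℂ)).symm.toContinuousLinearMap.restrictScalars
        ℝ).hasFDerivAt.comp_hasDerivAt x hg)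
      rw [show (fun t => f t y) = _ from funext fun t => hf t y]
      exact h
    rw [hD.deriv, hf]
    simp only [PiLp.inner_apply, RCLike.inner_apply, PiLp.smul_apply, smul_eq_mul,
      WithLp.equiv_symm_apply, PiLp.toLp_apply, Fin.sum_univ_four, Matrix.cons_val_zero,
      Matrix.cons_val_one, Matrix.head_cons, Matrix.cons_val_two, Matrix.tail_cons,
      Matrix.cons_val_three, map_mul, map_div₀, map_neg, Complex.conj_I,
      Complex.conj_ofReal, hconjE, hconjF]
    apply re_eq_zero_of_eq_zero
    linear_combination (-((A:ℝ):ℂ)^2/(μ:ℂ)) * hEE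
      + ((μ:ℂ)*((B:ℝ):ℂ)^2*(((y 0:ℝ):ℂ)^2+((y 1:ℝ):ℂ)^2+((y 2:ℝ):ℂ)^2)) * hFF
      + ((μ:ℂ)*((B:ℝ):ℂ)^2) * hy2c + (-(1:ℂ)/(μ:ℂ)) * hA2c + (μ:ℂ) * hB2c
      + ((((A:ℝ):ℂ)^2/(μ:ℂ)) * (Complex.exp (Complex.I * ((x/μ : ℝ) : ℂ)) * E)
        - (μ:ℂ)*((B:ℝ):ℂ)^2*(((y 0:ℝ):ℂ)^2+((y 1:ℝ):ℂ)^2+((y 2:ℝ):ℂ)^2)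
          * (F * Complex.exp (-Complex.I * ((μ*x : ℝ) : ℂ)))) * Complex.I_sq
      + (-(μ:ℂ)*(1+(μ:ℂ)^2)⁻¹) * (mul_inv_cancel₀ hμ0')
  · -- contact form on tangent directions in y
    intro V
    rw [hf]
    simp only [PiLp.inner_apply, RCLike.inner_apply, PiLp.smul_apply, smul_eq_mul,
      WithLp.equiv_symm_apply, PiLp.toLp_apply, Fin.sum_univ_four, Matrix.cons_val_zero,
      Matrix.cons_val_one, Matrix.head_cons, Matrix.cons_val_two, Matrix.tail_cons,
      Matrix.cons_val_three, map_mul, map_zero, Complex.conj_ofReal, hconjF]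
    apply re_eq_zero_of_eq_I_mul _ (B^2*(V 0 * y 0 + V 1 * y 1 + V 2 * y 2))
    rw [show (((B^2*(V 0 * y 0 + V 1 * y 1 + V 2 * y 2) : ℝ)):ℂ)
        = ((B:ℝ):ℂ)^2*(((V 0:ℝ):ℂ)*((y 0:ℝ):ℂ)+((V 1:ℝ):ℂ)*((y 1:ℝ):ℂ)+((V 2:ℝ):ℂ)*((y 2:ℝ):ℂ)) by
      push_cast; ring]
    linear_combination (Complex.I*((B:ℝ):ℂ)^2*(((V 0:ℝ):ℂ)*((y 0:ℝ):ℂ)+((V 1:ℝ):ℂ)*((y 1:ℝ):ℂ)+((V 2:ℝ):ℂ)*((y 2:ℝ):ℂ))) * hFF
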